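/- (Theorem 3.1, uniqueness) If P and P̃ are two continuous functions on [0, T] that both satisfy, for all t ∈ [0, T], the equilibrium equation D(t) − C₀ − C₁·Φ(t) = −c₁(Φ)·ω²·cosh(ωt) + Φ(t)/(2α) + ∫_0^t ω·sinh(ω(t−s))·(Φ(s)/(2α)) ds (with Φ = P and Φ = P̃ respectively), and if 2αω·(γ·ω·sinh(ωT) + β·cosh(ωT)) − γ·B′ − β·B ≠ 0, where B = (ω³/(ω̃·(C₁ + 1/(2α))))·∫_0^T cosh(ωs)·sinh(ω̃(T−s)) ds and B′ = (ω³/(C₁ + 1/(2α)))·∫_0^T cosh(ωs)·cosh(ω̃(T−s)) ds with ω̃ = ω·√(C₁/(C₁ + 1/(2α))), then P(t) = P̃(t) for all t ∈ [0, T]. -/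

import Mathlib

open Real Set intervalIntegral MeasureTheory

private lemma hda_lin (a t s : ℝ) : HasDerivAt (fun s : ℝ => a * (t - s)) (-a) s := by
  simpa using (((hasDerivAt_id s).const_sub t).const_mul a)

private lemma hda_mul (b s : ℝ) : HasDerivAt (fun s : ℝ => b * s) b s := by
  simpa using ((hasDerivAt_id s).const_mul b)

/-- ∫₀ᵗ sinh(a(t−s)) cosh(bs) ds -/
private lemma conv_sc (a b t : ℝ) (hab : a ^ 2 - b ^ 2 ≠ 0) :
    ∫ s in (0:ℝ)..t, Real.sinh (a * (t - s)) * Real.cosh (b * s)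
      = a * (Real.cosh (a * t) - Real.cosh (b * t)) / (a ^ 2 - b ^ 2) := by
  have hd : ∀ s ∈ Set.uIcc (0:ℝ) t, HasDerivAt
      (fun s => (a * (Real.cosh (a * (t - s)) * Real.cosh (b * s))
        + b * (Real.sinh (a * (t - s)) * Real.sinh (b * s))) / (b ^ 2 - a ^ 2))
      (Real.sinh (a * (t - s)) * Real.cosh (b * s)) s := by
    intro s _
    have H := ((((hda_lin a t s).cosh.mul (hda_mul b s).cosh).const_mul a).add
      (((hda_lin a t s).sinh.mul (hda_mul b s).sinh).const_mul b)).div_const (b ^ 2 - a ^ 2)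
    refine H.congr_deriv ?_
    have h2 : b ^ 2 - a ^ 2 ≠ 0 := by intro h; apply hab; linarith
    field_simp
    ring
  have hint : IntervalIntegrable
      (fun s => Real.sinh (a * (t - s)) * Real.cosh (b * s)) volume 0 t := by
    apply Continuous.intervalIntegrable
    fun_prop
  rw [intervalIntegral.integral_eq_sub_of_hasDerivAt hd hint]
  have h2 : b ^ 2 - a ^ 2 ≠ 0 := by intro h; apply hab; linarith
  simp only [sub_self, mul_zero, Real.cosh_zero, Real.sinh_zero, sub_zero]
  field_simp
  ring

/-- ∫₀ᵗ cosh(a(t−s)) cosh(bs) ds -/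
private lemma conv_cc (a b t : ℝ) (hab : a ^ 2 - b ^ 2 ≠ 0) :
    ∫ s in (0:ℝ)..t, Real.cosh (a * (t - s)) * Real.cosh (b * s)
      = (a * Real.sinh (a * t) - b * Real.sinh (b * t)) / (a ^ 2 - b ^ 2) := by
  have hd : ∀ s ∈ Set.uIcc (0:ℝ) t, HasDerivAt
      (fun s => (a * (Real.sinh (a * (t - s)) * Real.cosh (b * s))
        + b * (Real.cosh (a * (t - s)) * Real.sinh (b * s))) / (b ^ 2 - a ^ 2))
      (Real.cosh (a * (t - s)) * Real.cosh (b * s)) s := by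
    intro s _
    have H := ((((hda_lin a t s).sinh.mul (hda_mul b s).cosh).const_mul a).add
      (((hda_lin a t s).cosh.mul (hda_mul b s).sinh).const_mul b)).div_const (b ^ 2 - a ^ 2)
    refine H.congr_deriv ?_
    have h2 : b ^ 2 - a ^ 2 ≠ 0 := by intro h; apply hab; linarith
    field_simp
    ring
  have hint : IntervalIntegrable
      (fun s => Real.cosh (a * (t - s)) * Real.cosh (b * s)) volume 0 t := by
    apply Continuous.intervalIntegrable
    fun_prop
  rw [intervalIntegral.integral_eq_sub_of_hasDerivAt hd hint]
  have h2 : b ^ 2 - a ^ 2 ≠ 0 := by intro h; apply hab; linarith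
  simp only [sub_self, mul_zero, Real.cosh_zero, Real.sinh_zero, sub_zero]
  field_simp
  ring
private lemma volterra_zero {T C : ℝ} (hT : 0 ≤ T) (hC : 0 ≤ C) {h : ℝ → ℝ}
    (hc : ContinuousOn h (Set.Icc 0 T))
    (hineq : ∀ t ∈ Set.Icc (0:ℝ) T, |h t| ≤ C * ∫ s in (0:ℝ)..t, |h s|) :
    ∀ t ∈ Set.Icc (0:ℝ) T, h t = 0 := by
  have habs : ContinuousOn (fun s => |h s|) (Set.Icc 0 T) := hc.abs
  set f : ℝ → ℝ := fun t => ∫ s in (0:ℝ)..t, |h s| with hf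
  have hintT : IntervalIntegrable (fun s => |h s|) volume 0 T := by
    apply (habs.mono ?_).intervalIntegrable
    rw [Set.uIcc_of_le hT]
  have hfc : ContinuousOn f (Set.Icc 0 T) := by
    have := intervalIntegral.continuousOn_primitive_interval' hintT
      (by rw [Set.uIcc_of_le hT]; exact Set.left_mem_Icc.2 hT)
    rwa [Set.uIcc_of_le hT] at this
  have hderiv : ∀ x ∈ Set.Ico (0:ℝ) T, HasDerivWithinAt f (|h x|) (Set.Ici x) x := by
    intro x hx
    have hxmem : x ∈ Set.Icc (0:ℝ) T := ⟨hx.1, hx.2.le⟩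
    have hint : IntervalIntegrable (fun s => |h s|) volume 0 x := by
      apply (habs.mono ?_).intervalIntegrable
      rw [Set.uIcc_of_le hx.1]
      exact Set.Icc_subset_Icc le_rfl hx.2.le
    have hmemIcc : Set.Icc (0:ℝ) T ∈ nhdsWithin x (Set.Ioi x) :=
      Icc_mem_nhdsGT_of_mem ⟨hx.1, hx.2⟩
    have hmeas : StronglyMeasurableAtFilter (fun s => |h s|) (nhdsWithin x (Set.Ioi x)) volume :=
      ⟨Set.Icc 0 T, hmemIcc, habs.aestronglyMeasurable measurableSet_Icc⟩
    have hcw : ContinuousWithinAt (fun s => |h s|) (Set.Ioi x) x :=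
      (habs x hxmem).mono_of_mem_nhdsWithin hmemIcc
    exact intervalIntegral.integral_hasDerivWithinAt_right hint hmeas hcw
  have hf0 : f 0 = 0 := by simp [hf]
  have hbound : ∀ x ∈ Set.Ico (0:ℝ) T, ‖|h x|‖ ≤ C * ‖f x‖ + 0 := by
    intro x hx
    have hxmem : x ∈ Set.Icc (0:ℝ) T := ⟨hx.1, hx.2.le⟩
    have hfnn : 0 ≤ f x :=
      intervalIntegral.integral_nonneg hx.1 (fun s _ => abs_nonneg _)
    rw [Real.norm_eq_abs, abs_abs, Real.norm_eq_abs, abs_of_nonneg hfnn, add_zero]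
    exact hineq x hxmem
  have hmain := norm_le_gronwallBound_of_norm_deriv_right_le (δ := 0) (K := C) (ε := 0)
    hfc hderiv (by simp [hf0]) hbound
  intro t ht
  have h1 := hmain t ht
  rw [gronwallBound_ε0] at h1
  simp only [zero_mul] at h1
  have hfnn : 0 ≤ f t := intervalIntegral.integral_nonneg ht.1 (fun s _ => abs_nonneg _)
  have hft : f t = 0 := le_antisymm (by simpa [Real.norm_eq_abs, abs_of_nonneg hfnn] using h1) hfnn
  have : |h t| ≤ C * f t := hineq t ht
  rw [hft, mul_zero] at this
  exact abs_eq_zero.mp (le_antisymm this (abs_nonneg _))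

set_option maxHeartbeats 1000000 in
/-- (Theorem 3.1, uniqueness) If `P` and `Ptil` are two continuous functions on `[0,T]` both
satisfying the equilibrium equation, and the denominator
`2αω·(γ·ω·sinh(ωT) + β·cosh(ωT)) − γ·B′ − β·B` is nonzero, then `P = Ptil` on `[0,T]`. -/
theorem stmt_15 (α β γ T : ℝ) (hα : 0 < α) (hβ : 0 < β) (hγ : 0 < γ) (hT : 0 < T)
    (ω : ℝ) (hω : ω = Real.sqrt (β / α))
    (c₁ : (ℝ → ℝ) → ℝ)
    (hc₁ : ∀ Φ : ℝ → ℝ, c₁ Φ =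
      (γ * (∫ s in (0:ℝ)..T, Real.cosh (ω * (T - s)) * (Φ s / (2 * α))) +
        β * ∫ s in (0:ℝ)..T, (Real.sinh (ω * (T - s)) / ω) * (Φ s / (2 * α))) /
      (γ * ω * Real.sinh (ω * T) + β * Real.cosh (ω * T)))
    (C₀ C₁ : ℝ) (hC₁ : 0 < C₁)
    (D : ℝ → ℝ) (hD : ContinuousOn D (Set.Icc 0 T))
    (ω' : ℝ) (hω' : ω' = ω * Real.sqrt (C₁ / (C₁ + 1 / (2 * α))))
    (B B' : ℝ)
    (hB : B = (ω ^ 3 / (ω' * (C₁ + 1 / (2 * α)))) *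
      ∫ s in (0:ℝ)..T, Real.cosh (ω * s) * Real.sinh (ω' * (T - s)))
    (hB' : B' = (ω ^ 3 / (C₁ + 1 / (2 * α))) *
      ∫ s in (0:ℝ)..T, Real.cosh (ω * s) * Real.cosh (ω' * (T - s)))
    (hden : 2 * α * ω * (γ * ω * Real.sinh (ω * T) + β * Real.cosh (ω * T))
      - γ * B' - β * B ≠ 0)
    (P Ptil : ℝ → ℝ) (hPc : ContinuousOn P (Set.Icc 0 T)) (hPtilc : ContinuousOn Ptil (Set.Icc 0 T))
    (hP : ∀ t ∈ Set.Icc (0 : ℝ) T,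
      D t - C₀ - C₁ * P t = -(c₁ P) * ω ^ 2 * Real.cosh (ω * t) + P t / (2 * α) +
        ∫ s in (0:ℝ)..t, ω * Real.sinh (ω * (t - s)) * (P s / (2 * α)))
    (hPtil : ∀ t ∈ Set.Icc (0 : ℝ) T,
      D t - C₀ - C₁ * Ptil t = -(c₁ Ptil) * ω ^ 2 * Real.cosh (ω * t) + Ptil t / (2 * α) +
        ∫ s in (0:ℝ)..t, ω * Real.sinh (ω * (t - s)) * (Ptil s / (2 * α))) :
    ∀ t ∈ Set.Icc (0 : ℝ) T, P t = Ptil t := by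
  have hα2 : (0:ℝ) < 2 * α := by linarith
  have hωpos : 0 < ω := by rw [hω]; exact Real.sqrt_pos.2 (div_pos hβ hα)
  set a : ℝ := C₁ + 1 / (2 * α) with ha_def
  have hapos : 0 < a := by
    have : 0 < 1 / (2 * α) := by positivity
    rw [ha_def]; linarith
  have hω'pos : 0 < ω' := by
    rw [hω']; exact mul_pos hωpos (Real.sqrt_pos.2 (div_pos hC₁ hapos))
  have hω'sq : ω' ^ 2 = ω ^ 2 * (C₁ / a) := by
    rw [hω', mul_pow, Real.sq_sqrt (div_pos hC₁ hapos).le]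
  have hω'lt : ω' ^ 2 < ω ^ 2 := by
    rw [hω'sq]
    have h1 : C₁ / a < 1 := (div_lt_one hapos).2 (by
      have : 0 < 1 / (2 * α) := by positivity
      rw [ha_def]; linarith)
    nlinarith [pow_pos hωpos 2]
  have hdiffpos : 0 < ω ^ 2 - ω' ^ 2 := by linarith
  have hdiffne : ω ^ 2 - ω' ^ 2 ≠ 0 := ne_of_gt hdiffpos
  have hdiffne' : ω' ^ 2 - ω ^ 2 ≠ 0 := by intro hcon; apply hdiffne; linarith
  have hkey : ω ^ 2 - ω' ^ 2 = ω ^ 2 / (2 * α * a) := by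
    rw [hω'sq, ha_def]
    field_simp
    ring
  have hane : a ≠ 0 := ne_of_gt hapos
  have hαne : α ≠ 0 := ne_of_gt hα
  have hωne : ω ≠ 0 := ne_of_gt hωpos
  have hω'ne : ω' ≠ 0 := ne_of_gt hω'pos
  clear_value a
  set κ : ℝ := c₁ P - c₁ Ptil with hκ_def
  set Q : ℝ → ℝ := fun t => P t - Ptil t with hQ_def
  have hQc : ContinuousOn Q (Set.Icc 0 T) := hPc.sub hPtilc
  -- Step E : the Volterra equation for Q
  have hE : ∀ t ∈ Set.Icc (0:ℝ) T,
      a * Q t = κ * ω ^ 2 * Real.cosh (ω * t)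
        - (ω / (2 * α)) * ∫ s in (0:ℝ)..t, Real.sinh (ω * (t - s)) * Q s := by
    intro t ht
    have hsub : Set.uIcc (0:ℝ) t ⊆ Set.Icc 0 T := by
      rw [Set.uIcc_of_le ht.1]; exact Set.Icc_subset_Icc le_rfl ht.2
    have intP : IntervalIntegrable
        (fun s => ω * Real.sinh (ω * (t - s)) * (P s / (2 * α))) volume 0 t :=
      (((by fun_prop : Continuous fun s => ω * Real.sinh (ω * (t - s))).continuousOn).mul
        ((hPc.mono hsub).div_const _)).intervalIntegrable
    have intPt : IntervalIntegrable
        (fun s => ω * Real.sinh (ω * (t - s)) * (Ptil s / (2 * α))) volume 0 t :=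
      (((by fun_prop : Continuous fun s => ω * Real.sinh (ω * (t - s))).continuousOn).mul
        ((hPtilc.mono hsub).div_const _)).intervalIntegrable
    have hdiffint : (∫ s in (0:ℝ)..t, ω * Real.sinh (ω * (t - s)) * (P s / (2 * α)))
        - (∫ s in (0:ℝ)..t, ω * Real.sinh (ω * (t - s)) * (Ptil s / (2 * α)))
        = (ω / (2 * α)) * ∫ s in (0:ℝ)..t, Real.sinh (ω * (t - s)) * Q s := by
      rw [← intervalIntegral.integral_sub intP intPt, ← intervalIntegral.integral_const_mul]
      apply intervalIntegral.integral_congr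
      intro s _
      simp only [hQ_def]
      field_simp
    have h1 := hP t ht
    have h2 := hPtil t ht
    simp only [hQ_def, hκ_def, ha_def]
    linear_combination h2 - h1 - hdiffint
  -- Step G : explicit solution of the Volterra equation with rhs ω²cosh(ωt)
  have hG : ∀ t : ℝ, a * ((ω ^ 2 / a) * Real.cosh (ω' * t))
      = ω ^ 2 * Real.cosh (ω * t)
        - (ω / (2 * α)) * ∫ s in (0:ℝ)..t,
            Real.sinh (ω * (t - s)) * ((ω ^ 2 / a) * Real.cosh (ω' * s)) := by
    intro t
    have h1 : (∫ s in (0:ℝ)..t, Real.sinh (ω * (t - s)) * ((ω ^ 2 / a) * Real.cosh (ω' * s)))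
        = (ω ^ 2 / a) * (ω * (Real.cosh (ω * t) - Real.cosh (ω' * t)) / (ω ^ 2 - ω' ^ 2)) := by
      rw [← conv_sc ω ω' t hdiffne, ← intervalIntegral.integral_const_mul]
      apply intervalIntegral.integral_congr
      intro s _
      ring
    rw [h1, hkey]
    field_simp
    ring
  -- Step H : h = Q - κ·g satisfies the homogeneous equation
  set h : ℝ → ℝ := fun t => Q t - κ * ((ω ^ 2 / a) * Real.cosh (ω' * t)) with hh_def
  have hhc : ContinuousOn h (Set.Icc 0 T) := by
    apply hQc.sub
    apply Continuous.continuousOn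
    fun_prop
  have hH : ∀ t ∈ Set.Icc (0:ℝ) T,
      a * h t = -(ω / (2 * α)) * ∫ s in (0:ℝ)..t, Real.sinh (ω * (t - s)) * h s := by
    intro t ht
    have hsub : Set.uIcc (0:ℝ) t ⊆ Set.Icc 0 T := by
      rw [Set.uIcc_of_le ht.1]; exact Set.Icc_subset_Icc le_rfl ht.2
    have intQ : IntervalIntegrable (fun s => Real.sinh (ω * (t - s)) * Q s) volume 0 t :=
      (((by fun_prop : Continuous fun s => Real.sinh (ω * (t - s))).continuousOn).mul
        (hQc.mono hsub)).intervalIntegrable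
    have intg : IntervalIntegrable
        (fun s => Real.sinh (ω * (t - s)) * ((ω ^ 2 / a) * Real.cosh (ω' * s))) volume 0 t := by
      apply Continuous.intervalIntegrable; fun_prop
    have hsplit : (∫ s in (0:ℝ)..t, Real.sinh (ω * (t - s)) * h s)
        = (∫ s in (0:ℝ)..t, Real.sinh (ω * (t - s)) * Q s)
          - κ * ∫ s in (0:ℝ)..t, Real.sinh (ω * (t - s)) * ((ω ^ 2 / a) * Real.cosh (ω' * s)) := by
      rw [← intervalIntegral.integral_const_mul,
        ← intervalIntegral.integral_sub intQ (intg.const_mul κ)]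
      apply intervalIntegral.integral_congr
      intro s _
      simp only [hh_def]
      ring
    have e1 := hE t ht
    have e2 := hG t
    rw [hsplit]
    simp only [hh_def]
    linear_combination e1 - κ * e2
  -- Gronwall: h vanishes on [0,T]
  have hCnn : 0 ≤ ω * Real.sinh (ω * T) / (2 * α * a) := by
    have h1 : 0 ≤ Real.sinh (ω * T) := Real.sinh_nonneg_iff.2 (by positivity)
    positivity
  have hbound : ∀ t ∈ Set.Icc (0:ℝ) T,
      |h t| ≤ (ω * Real.sinh (ω * T) / (2 * α * a)) * ∫ s in (0:ℝ)..t, |h s| := by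
    intro t ht
    have hsub : Set.uIcc (0:ℝ) t ⊆ Set.Icc 0 T := by
      rw [Set.uIcc_of_le ht.1]; exact Set.Icc_subset_Icc le_rfl ht.2
    have inth : IntervalIntegrable (fun s => Real.sinh (ω * (t - s)) * h s) volume 0 t :=
      (((by fun_prop : Continuous fun s => Real.sinh (ω * (t - s))).continuousOn).mul
        (hhc.mono hsub)).intervalIntegrable
    have inthabs2 : IntervalIntegrable (fun s => Real.sinh (ω * T) * |h s|) volume 0 t :=
      (((hhc.mono hsub).abs).intervalIntegrable).const_mul _
    have hpt : ∀ s ∈ Set.Icc (0:ℝ) t,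
        |Real.sinh (ω * (t - s)) * h s| ≤ Real.sinh (ω * T) * |h s| := by
      intro s hs
      rw [abs_mul]
      apply mul_le_mul_of_nonneg_right _ (abs_nonneg _)
      rw [abs_of_nonneg (Real.sinh_nonneg_iff.2 (by nlinarith [hs.1, hs.2]))]
      exact Real.sinh_le_sinh.2 (by nlinarith [hs.1, hs.2, ht.2])
    have c1 : |∫ s in (0:ℝ)..t, Real.sinh (ω * (t - s)) * h s|
        ≤ Real.sinh (ω * T) * ∫ s in (0:ℝ)..t, |h s| := by
      refine le_trans (intervalIntegral.abs_integral_le_integral_abs ht.1) ?_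
      rw [← intervalIntegral.integral_const_mul]
      exact intervalIntegral.integral_mono_on ht.1 inth.abs inthabs2 hpt
    have habs : a * |h t|
        = (ω / (2 * α)) * |∫ s in (0:ℝ)..t, Real.sinh (ω * (t - s)) * h s| := by
      have h0 : |a * h t| = |(-(ω / (2 * α))) *
          ∫ s in (0:ℝ)..t, Real.sinh (ω * (t - s)) * h s| := by rw [hH t ht]
      rwa [abs_mul, abs_mul, abs_of_pos hapos, abs_neg,
        abs_of_pos (div_pos hωpos hα2)] at h0
    have hfinal : a * |h t|
        ≤ a * ((ω * Real.sinh (ω * T) / (2 * α * a)) * ∫ s in (0:ℝ)..t, |h s|) := by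
      rw [habs]
      calc (ω / (2 * α)) * |∫ s in (0:ℝ)..t, Real.sinh (ω * (t - s)) * h s|
          ≤ (ω / (2 * α)) * (Real.sinh (ω * T) * ∫ s in (0:ℝ)..t, |h s|) :=
            mul_le_mul_of_nonneg_left c1 (div_pos hωpos hα2).le
        _ = a * ((ω * Real.sinh (ω * T) / (2 * α * a)) * ∫ s in (0:ℝ)..t, |h s|) := by
            field_simp
    exact le_of_mul_le_mul_left hfinal hapos
  have hzero := volterra_zero hT.le hCnn hhc hbound
  have hQg : ∀ t ∈ Set.Icc (0:ℝ) T,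
      P t - Ptil t = κ * ((ω ^ 2 / a) * Real.cosh (ω' * t)) := by
    intro t ht
    have h0 := hzero t ht
    simp only [hh_def, hQ_def] at h0
    linarith
  -- Step K : κ = 0
  have hden0pos : 0 < γ * ω * Real.sinh (ω * T) + β * Real.cosh (ω * T) := by
    have h1 : 0 < Real.sinh (ω * T) := Real.sinh_pos_iff.2 (by positivity)
    linarith [mul_pos (mul_pos hγ hωpos) h1, mul_pos hβ (Real.cosh_pos (x := ω * T))]
  have hsubT : Set.uIcc (0:ℝ) T ⊆ Set.Icc 0 T := by rw [Set.uIcc_of_le hT.le]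
  have intIcP : IntervalIntegrable
      (fun s => Real.cosh (ω * (T - s)) * (P s / (2 * α))) volume 0 T :=
    (((by fun_prop : Continuous fun s => Real.cosh (ω * (T - s))).continuousOn).mul
      ((hPc.mono hsubT).div_const _)).intervalIntegrable
  have intIcPt : IntervalIntegrable
      (fun s => Real.cosh (ω * (T - s)) * (Ptil s / (2 * α))) volume 0 T :=
    (((by fun_prop : Continuous fun s => Real.cosh (ω * (T - s))).continuousOn).mul
      ((hPtilc.mono hsubT).div_const _)).intervalIntegrable
  have intIsP : IntervalIntegrable
      (fun s => Real.sinh (ω * (T - s)) / ω * (P s / (2 * α))) volume 0 T :=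
    (((by fun_prop : Continuous fun s => Real.sinh (ω * (T - s)) / ω).continuousOn).mul
      ((hPc.mono hsubT).div_const _)).intervalIntegrable
  have intIsPt : IntervalIntegrable
      (fun s => Real.sinh (ω * (T - s)) / ω * (Ptil s / (2 * α))) volume 0 T :=
    (((by fun_prop : Continuous fun s => Real.sinh (ω * (T - s)) / ω).continuousOn).mul
      ((hPtilc.mono hsubT).div_const _)).intervalIntegrable
  have hIc : (∫ s in (0:ℝ)..T, Real.cosh (ω * (T - s)) * (P s / (2 * α)))
      - (∫ s in (0:ℝ)..T, Real.cosh (ω * (T - s)) * (Ptil s / (2 * α)))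
      = (κ * (ω ^ 2 / (2 * α * a))) *
        ((ω * Real.sinh (ω * T) - ω' * Real.sinh (ω' * T)) / (ω ^ 2 - ω' ^ 2)) := by
    rw [← intervalIntegral.integral_sub intIcP intIcPt, ← conv_cc ω ω' T hdiffne,
      ← intervalIntegral.integral_const_mul]
    apply intervalIntegral.integral_congr
    intro s hs
    have hq := hQg s (hsubT hs)
    linear_combination (Real.cosh (ω * (T - s)) / (2 * α)) * hq
  have hIs : (∫ s in (0:ℝ)..T, Real.sinh (ω * (T - s)) / ω * (P s / (2 * α)))
      - (∫ s in (0:ℝ)..T, Real.sinh (ω * (T - s)) / ω * (Ptil s / (2 * α)))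
      = (κ * (ω ^ 2 / (2 * α * a * ω))) *
        (ω * (Real.cosh (ω * T) - Real.cosh (ω' * T)) / (ω ^ 2 - ω' ^ 2)) := by
    rw [← intervalIntegral.integral_sub intIsP intIsPt, ← conv_sc ω ω' T hdiffne,
      ← intervalIntegral.integral_const_mul]
    apply intervalIntegral.integral_congr
    intro s hs
    have hq := hQg s (hsubT hs)
    linear_combination (Real.sinh (ω * (T - s)) / (ω * (2 * α))) * hq
  have hc1P : c₁ P * (γ * ω * Real.sinh (ω * T) + β * Real.cosh (ω * T))
      = γ * (∫ s in (0:ℝ)..T, Real.cosh (ω * (T - s)) * (P s / (2 * α)))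
        + β * ∫ s in (0:ℝ)..T, Real.sinh (ω * (T - s)) / ω * (P s / (2 * α)) := by
    rw [hc₁ P, div_mul_cancel₀ _ (ne_of_gt hden0pos)]
  have hc1Pt : c₁ Ptil * (γ * ω * Real.sinh (ω * T) + β * Real.cosh (ω * T))
      = γ * (∫ s in (0:ℝ)..T, Real.cosh (ω * (T - s)) * (Ptil s / (2 * α)))
        + β * ∫ s in (0:ℝ)..T, Real.sinh (ω * (T - s)) / ω * (Ptil s / (2 * α)) := by
    rw [hc₁ Ptil, div_mul_cancel₀ _ (ne_of_gt hden0pos)]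
  have hκden : κ * (γ * ω * Real.sinh (ω * T) + β * Real.cosh (ω * T))
      = κ * (γ * (ω ^ 2 / (2 * α * a)) *
          ((ω * Real.sinh (ω * T) - ω' * Real.sinh (ω' * T)) / (ω ^ 2 - ω' ^ 2))
        + β * (ω ^ 2 / (2 * α * a * ω)) *
          (ω * (Real.cosh (ω * T) - Real.cosh (ω' * T)) / (ω ^ 2 - ω' ^ 2))) := by
    simp only [hκ_def]
    linear_combination hc1P - hc1Pt + γ * hIc + β * hIs
  have hκ0 : κ = 0 := by
    by_contra hκne
    apply hden
    have h3 := mul_left_cancel₀ hκne hκden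
    have hBval : B = ω ^ 3 / (ω' * a) *
        (ω' * (Real.cosh (ω' * T) - Real.cosh (ω * T)) / (ω' ^ 2 - ω ^ 2)) := by
      rw [hB]
      congr 1
      rw [← conv_sc ω' ω T hdiffne']
      apply intervalIntegral.integral_congr
      intro s _
      ring
    have hB'val : B' = ω ^ 3 / a *
        ((ω' * Real.sinh (ω' * T) - ω * Real.sinh (ω * T)) / (ω' ^ 2 - ω ^ 2)) := by
      rw [hB']
      congr 1
      rw [← conv_cc ω' ω T hdiffne']
      apply intervalIntegral.integral_congr
      intro s _
      ring
    rw [hBval, hB'val, h3]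
    field_simp
    ring
  intro t ht
  have hq := hQg t ht
  rw [hκ0, zero_mul] at hq
  linarith
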